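/- For all x with 0 < x ≤ π/2, we have (4·sin(x/2)·2 − sin(x))/3 < x, i.e. x exceeds the chord of the arc plus one third of the difference between the chord and the sine: x > 2·sin(x/2) + (1/3)·(2·sin(x/2) − sin(x)). -/

import Mathlib

theorem huygens_first_arc_inequality (x : ℝ) (h0 : 0 < x) (h1 : x ≤ Real.pi / 2) :
    x > 2 * Real.sin (x / 2) + (1 / 3) * (2 * Real.sin (x / 2) - Real.sin x) := by
  set t := x / 2 with ht
  have hx : x = 2 * t := by rw [ht]; ring
  have h0t : 0 < t := by simp [ht]; linarith
  have h1t : t ≤ Real.pi / 4 := by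
    have := Real.pi_pos; simp only [ht]; linarith
  have hsin : Real.sin x = 2 * Real.sin t * Real.cos t := by
    rw [hx, Real.sin_two_mul]
  set f : ℝ → ℝ := fun s => 3 * s - 4 * Real.sin s + Real.sin s * Real.cos s with hf
  have hd : ∀ s : ℝ, HasDerivAt f
      (3 - 4 * Real.cos s + (Real.cos s * Real.cos s - Real.sin s * Real.sin s)) s := by
    intro s
    have d1 : HasDerivAt (fun s : ℝ => 3 * s) 3 s := by
      simpa using (hasDerivAt_id s).const_mul 3
    have d2 := (Real.hasDerivAt_sin s).const_mul (4 : ℝ)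
    have d3 := (Real.hasDerivAt_sin s).mul (Real.hasDerivAt_cos s)
    have := (d1.sub d2).add d3
    exact this.congr_deriv (by ring)
  have hmono : StrictMonoOn f (Set.Icc 0 t) := by
    apply strictMonoOn_of_deriv_pos (convex_Icc 0 t)
    · have : Continuous f := by
        simp only [hf]
        exact ((continuous_const.mul continuous_id).sub
          (continuous_const.mul Real.continuous_sin)).add
          (Real.continuous_sin.mul Real.continuous_cos)
      exact this.continuousOn
    · intro s hs
      rw [interior_Icc] at hs
      rw [(hd s).deriv]
      have hcos : Real.cos s < 1 := by
        have := Real.cos_lt_cos_of_nonneg_of_le_pi (le_refl 0)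
          (by linarith [Real.pi_pos, hs.2] : s ≤ Real.pi) hs.1
        simpa using this
      have hsq := Real.sin_sq_add_cos_sq s
      nlinarith [sq_nonneg (1 - Real.cos s)]
  have key : f 0 < f t := hmono (by simp [le_of_lt h0t]) (by simp [le_of_lt h0t, le_refl]) h0t
  have hf0 : f 0 = 0 := by simp [hf]
  have hft : f t = 3 * t - 4 * Real.sin t + Real.sin t * Real.cos t := rfl
  rw [hsin, hx]
  nlinarith [key, hf0, hft]
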